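/- Fix Δ > 0 and an exploration cost c > 0. Then there exists a unique σ̄ > 0 such that V(σ̄, Δ) = c, and for every σ > 0 one has V(σ, Δ) > c if and only if σ > σ̄. Hence the optimal exploration policy is a threshold rule in status-quo uncertainty. (Threshold characterization, Proposition 4 and Theorems 2 and 11.) -/

import Mathlib

open MeasureTheory

/-- The standard normal density `φ`. -/
noncomputable def stdNormalPDF (x : ℝ) : ℝ :=
  (Real.sqrt (2 * Real.pi))⁻¹ * Real.exp (-x ^ 2 / 2)

/-- The standard normal CDF `Φ`. -/
noncomputable def stdNormalCDF (x : ℝ) : ℝ :=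
  ∫ t in Set.Iic x, stdNormalPDF t

lemma sqrt_two_pi_pos : 0 < Real.sqrt (2 * Real.pi) :=
  Real.sqrt_pos.2 (by positivity)

lemma stdNormalPDF_pos (x : ℝ) : 0 < stdNormalPDF x := by
  unfold stdNormalPDF; positivity

lemma stdNormalPDF_le (x : ℝ) : stdNormalPDF x ≤ 1 := by
  unfold stdNormalPDF
  have h1 : Real.exp (-x ^ 2 / 2) ≤ 1 := by
    rw [Real.exp_le_one_iff]; nlinarith [sq_nonneg x]
  have h2 : (Real.sqrt (2 * Real.pi))⁻¹ ≤ 1 := by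
    rw [inv_le_one_iff₀]
    right
    rw [show (1:ℝ) = Real.sqrt 1 by simp]
    exact Real.sqrt_le_sqrt (by nlinarith [Real.pi_gt_three])
  calc (Real.sqrt (2 * Real.pi))⁻¹ * Real.exp (-x ^ 2 / 2)
      ≤ 1 * 1 := by
        apply mul_le_mul h2 h1 (le_of_lt (Real.exp_pos _)) zero_le_one
    _ = 1 := by ring

lemma integrable_stdNormalPDF : Integrable stdNormalPDF := by
  have : stdNormalPDF = fun x => (Real.sqrt (2 * Real.pi))⁻¹ * Real.exp (-(1/2) * x ^ 2) := by
    funext x; unfold stdNormalPDF; ring_nf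
  rw [this]
  exact (integrable_exp_neg_mul_sq (by norm_num : (0:ℝ) < 1/2)).const_mul _

lemma continuous_stdNormalPDF : Continuous stdNormalPDF := by
  unfold stdNormalPDF; continuity

lemma hasDerivAt_stdNormalPDF (x : ℝ) :
    HasDerivAt stdNormalPDF (-x * stdNormalPDF x) x := by
  have h1 : HasDerivAt (fun y : ℝ => -y ^ 2 / 2) (-x) x := by
    have := (hasDerivAt_pow 2 x).neg.div_const 2
    refine this.congr_deriv ?_
    push_cast; ring
  have h2 := (h1.exp).const_mul (Real.sqrt (2 * Real.pi))⁻¹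
  refine h2.congr_deriv ?_
  unfold stdNormalPDF; ring

lemma stdNormalCDF_nonneg (x : ℝ) : 0 ≤ stdNormalCDF x :=
  integral_nonneg fun t => (stdNormalPDF_pos t).le

lemma stdNormalCDF_le_one (x : ℝ) : stdNormalCDF x ≤ 1 := by
  have h1 : stdNormalCDF x ≤ ∫ t, stdNormalPDF t := by
    apply setIntegral_le_integral integrable_stdNormalPDF
    exact Filter.Eventually.of_forall fun t => (stdNormalPDF_pos t).le
  have h2 : ∫ t, stdNormalPDF t = 1 := by
    have hg : (∫ t : ℝ, Real.exp (-(1/2) * t ^ 2)) = Real.sqrt (2 * Real.pi) := by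
      rw [integral_gaussian]
      rw [show Real.pi / (1/2) = 2 * Real.pi by ring]
    have : (∫ t, stdNormalPDF t)
        = (Real.sqrt (2 * Real.pi))⁻¹ * ∫ t : ℝ, Real.exp (-(1/2) * t ^ 2) := by
      rw [← integral_const_mul]
      congr 1; funext t; unfold stdNormalPDF; ring_nf
    rw [this, hg, inv_mul_cancel₀ sqrt_two_pi_pos.ne']
  linarith

lemma hasDerivAt_stdNormalCDF (x : ℝ) :
    HasDerivAt stdNormalCDF (stdNormalPDF x) x := by
  have heq : stdNormalCDF = fun y => stdNormalCDF 0 + ∫ t in (0:ℝ)..y, stdNormalPDF t := by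
    funext y
    rw [← intervalIntegral.integral_Iic_sub_Iic integrable_stdNormalPDF.integrableOn
      integrable_stdNormalPDF.integrableOn]
    unfold stdNormalCDF; ring
  rw [heq]
  have h : HasDerivAt (fun y => ∫ t in (0:ℝ)..y, stdNormalPDF t) (stdNormalPDF x) x :=
    intervalIntegral.integral_hasDerivAt_right
      (integrable_stdNormalPDF.intervalIntegrable)
      (continuous_stdNormalPDF.stronglyMeasurableAtFilter _ _)
      continuous_stdNormalPDF.continuousAt
  exact h.const_add _

/-- The catalytic value `V(σ, Δ) = -Δ·Φ(-Δ/σ) + σ·φ(-Δ/σ)`. -/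
noncomputable def catalyticValue (σ Δ : ℝ) : ℝ :=
  -Δ * stdNormalCDF (-Δ / σ) + σ * stdNormalPDF (-Δ / σ)

lemma hasDerivAt_catalyticValue (Δ : ℝ) {σ : ℝ} (hσ : 0 < σ) :
    HasDerivAt (fun s => catalyticValue s Δ) (stdNormalPDF (-Δ / σ)) σ := by
  have hσ0 : σ ≠ 0 := hσ.ne'
  -- inner function
  have hg : HasDerivAt (fun s : ℝ => -Δ / s) (Δ / σ ^ 2) σ := by
    have := (hasDerivAt_inv hσ0).const_mul (-Δ)
    have heq : (fun s : ℝ => -Δ / s) = fun s : ℝ => -Δ * s⁻¹ := by funext s; ring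
    rw [heq]
    refine this.congr_deriv ?_
    field_simp
  have hcdf := (hasDerivAt_stdNormalCDF (-Δ / σ)).comp σ hg
  have hpdf := (hasDerivAt_stdNormalPDF (-Δ / σ)).comp σ hg
  have h1 : HasDerivAt (fun s => -Δ * stdNormalCDF (-Δ / s))
      (-Δ * (stdNormalPDF (-Δ / σ) * (Δ / σ ^ 2))) σ := hcdf.const_mul (-Δ)
  have h2 : HasDerivAt (fun s => s * stdNormalPDF (-Δ / s))
      (1 * stdNormalPDF (-Δ / σ) + σ * (-(-Δ / σ) * stdNormalPDF (-Δ / σ) * (Δ / σ ^ 2))) σ :=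
    (hasDerivAt_id σ).mul hpdf
  have h := h1.add h2
  have : -Δ * (stdNormalPDF (-Δ / σ) * (Δ / σ ^ 2))
      + (1 * stdNormalPDF (-Δ / σ) + σ * (-(-Δ / σ) * stdNormalPDF (-Δ / σ) * (Δ / σ ^ 2)))
      = stdNormalPDF (-Δ / σ) := by
    field_simp
    ring
  rw [this] at h
  exact h

lemma strictMonoV (Δ : ℝ) : StrictMonoOn (fun s => catalyticValue s Δ) (Set.Ioi 0) := by
  apply strictMonoOn_of_deriv_pos (convex_Ioi 0)
  · intro s hs
    exact (hasDerivAt_catalyticValue Δ hs).continuousAt.continuousWithinAt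
  · intro s hs
    rw [interior_Ioi] at hs
    rw [(hasDerivAt_catalyticValue Δ hs).deriv]
    exact stdNormalPDF_pos _

lemma V_le (Δ : ℝ) (hΔ : 0 < Δ) {σ : ℝ} (hσ : 0 < σ) : catalyticValue σ Δ ≤ σ := by
  unfold catalyticValue
  have h1 : -Δ * stdNormalCDF (-Δ / σ) ≤ 0 := by
    have := stdNormalCDF_nonneg (-Δ / σ); nlinarith
  have h2 : σ * stdNormalPDF (-Δ / σ) ≤ σ * 1 :=
    mul_le_mul_of_nonneg_left (stdNormalPDF_le _) hσ.le
  linarith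

lemma V_ge (Δ : ℝ) (hΔ : 0 < Δ) {σ : ℝ} (hσ : Δ ≤ σ) : σ / 6 - Δ ≤ catalyticValue σ Δ := by
  have hσ0 : 0 < σ := lt_of_lt_of_le hΔ hσ
  unfold catalyticValue
  have h1 : -Δ ≤ -Δ * stdNormalCDF (-Δ / σ) := by
    have := stdNormalCDF_le_one (-Δ / σ); nlinarith
  have hpdf : (1:ℝ) / 6 ≤ stdNormalPDF (-Δ / σ) := by
    unfold stdNormalPDF
    have hu : (-Δ / σ) ^ 2 ≤ 1 := by
      rw [div_pow, div_le_one (by positivity)]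
      nlinarith
    have hexp : Real.exp (-(1:ℝ)/2) ≤ Real.exp (-(-Δ / σ) ^ 2 / 2) := by
      apply Real.exp_le_exp.2; linarith
    have hexp2 : (1:ℝ)/2 ≤ Real.exp (-(1:ℝ)/2) := by
      have hee : Real.exp ((1:ℝ)/2) * Real.exp ((1:ℝ)/2) = Real.exp 1 := by
        rw [← Real.exp_add]; norm_num
      have he2 : Real.exp ((1:ℝ)/2) ≤ 2 := by
        nlinarith [Real.exp_one_lt_d9, Real.exp_pos ((1:ℝ)/2)]
      rw [show (-(1:ℝ)/2) = -((1:ℝ)/2) by norm_num, Real.exp_neg]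
      have hinv : Real.exp ((1:ℝ)/2) * (Real.exp ((1:ℝ)/2))⁻¹ = 1 :=
        mul_inv_cancel₀ (Real.exp_pos _).ne'
      nlinarith [inv_nonneg.2 (Real.exp_pos ((1:ℝ)/2)).le]
    have hsq : Real.sqrt (2 * Real.pi) ≤ 3 := by
      rw [show (3:ℝ) = Real.sqrt 9 by rw [show (9:ℝ) = 3^2 by norm_num, Real.sqrt_sq]; norm_num]
      exact Real.sqrt_le_sqrt (by nlinarith [Real.pi_lt_d2])
    have h3 : (1:ℝ)/3 ≤ (Real.sqrt (2 * Real.pi))⁻¹ := by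
      rw [le_inv_comm₀ (by norm_num) sqrt_two_pi_pos]
      linarith
    calc (1:ℝ)/6 = (1/3) * (1/2) := by norm_num
      _ ≤ (Real.sqrt (2 * Real.pi))⁻¹ * Real.exp (-(-Δ / σ) ^ 2 / 2) := by
          apply mul_le_mul h3 (le_trans hexp2 hexp) (by norm_num) (by positivity)
  have h2 : σ * (1/6) ≤ σ * stdNormalPDF (-Δ / σ) :=
    mul_le_mul_of_nonneg_left hpdf hσ0.le
  nlinarith

/-- Threshold characterization (Proposition 4, Theorems 2 and 11): for fixed `Δ > 0`
and cost `c > 0`, there is a unique `σ̄ > 0` with `V(σ̄, Δ) = c`, and for every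
`σ > 0`, `V(σ, Δ) > c` iff `σ > σ̄`. -/
theorem exploration_threshold_rule (Δ c : ℝ) (hΔ : 0 < Δ) (hc : 0 < c) :
    ∃ σbar : ℝ, 0 < σbar ∧ catalyticValue σbar Δ = c ∧
      (∀ σ' : ℝ, 0 < σ' → catalyticValue σ' Δ = c → σ' = σbar) ∧
      (∀ σ : ℝ, 0 < σ → (c < catalyticValue σ Δ ↔ σbar < σ)) := by
  set b : ℝ := 6 * c + 7 * Δ with hb
  have hbΔ : Δ ≤ b := by nlinarith
  have hb0 : 0 < b := by nlinarith
  set a : ℝ := min (c / 2) b with ha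
  have ha0 : 0 < a := lt_min (by linarith) hb0
  have hab : a ≤ b := min_le_right _ _
  have hVa : catalyticValue a Δ < c := by
    have := V_le Δ hΔ ha0
    have : a ≤ c / 2 := min_le_left _ _
    have := V_le Δ hΔ ha0
    linarith [min_le_left (c/2) b, V_le Δ hΔ ha0]
  have hVb : c < catalyticValue b Δ := by
    have := V_ge Δ hΔ hbΔ
    nlinarith
  have hcont : ContinuousOn (fun s => catalyticValue s Δ) (Set.Icc a b) := by
    intro s hs
    exact (hasDerivAt_catalyticValue Δ (lt_of_lt_of_le ha0 hs.1)).continuousAt.continuousWithinAt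
  obtain ⟨σbar, hσmem, hσeq⟩ := intermediate_value_Icc hab hcont ⟨hVa.le, hVb.le⟩
  have hσpos : 0 < σbar := lt_of_lt_of_le ha0 hσmem.1
  have hsm := strictMonoV Δ
  refine ⟨σbar, hσpos, hσeq, ?_, ?_⟩
  · intro σ' hσ' heq'
    exact hsm.injOn hσ' hσpos (heq'.trans hσeq.symm)
  · intro σ hσ
    rw [← show catalyticValue σbar Δ = c from hσeq]
    simpa using hsm.lt_iff_lt hσpos hσ
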